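/- Let n ≥ 2 and let v_1 < v_2 < ... < v_n be positive integers. Suppose s and t are coprime positive integers with s + t ≤ 2n such that no v_i is congruent to 0, s, or t modulo s + t. Then there exists a real number τ such that 1/(n+1) < {v_i τ} < n/(n+1) for every i = 1, ..., n. -/

import Mathlib

/-- The coprime-pair step of the proof of Theorem 1.3: if `s` and `t` are coprime positive
integers with `s + t ≤ 2n` and no `v i` is congruent to `0`, `s` or `t` modulo `s + t`,
then there is a time `τ` with `1/(n+1) < {v i · τ} < n/(n+1)` for all `i`. -/
theorem loose_time_of_coprime_pair (n : ℕ) (hn : 2 ≤ n) (v : ℕ → ℕ)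
    (hpos : ∀ i ∈ Finset.Icc 1 n, 0 < v i)
    (hmono : ∀ i ∈ Finset.Icc 1 n, ∀ j ∈ Finset.Icc 1 n, i < j → v i < v j)
    (s t : ℕ) (hs : 0 < s) (ht : 0 < t) (hcop : Nat.gcd s t = 1)
    (hsum : s + t ≤ 2 * n)
    (hmod : ∀ i ∈ Finset.Icc 1 n,
      ¬(v i ≡ 0 [MOD s + t]) ∧ ¬(v i ≡ s [MOD s + t]) ∧ ¬(v i ≡ t [MOD s + t])) :
    ∃ τ : ℝ, ∀ i ∈ Finset.Icc 1 n,
      1 / ((n : ℝ) + 1) < Int.fract ((v i : ℝ) * τ) ∧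
      Int.fract ((v i : ℝ) * τ) < (n : ℝ) / ((n : ℝ) + 1) := by
  set m := s + t with hm
  have hm2 : 1 < m := by omega
  have hcopm : Nat.Coprime s m := by
    rw [hm, add_comm, Nat.coprime_add_self_right]
    exact hcop
  obtain ⟨w, -, hw⟩ := Nat.exists_mul_mod_eq_one_of_coprime hcopm hm2
  have hw' : s * w ≡ 1 [MOD m] := by
    unfold Nat.ModEq
    simpa [Nat.mod_eq_of_lt hm2] using hw
  refine ⟨(w : ℝ) / m, fun i hi => ?_⟩
  obtain ⟨h0, hsc, htc⟩ := hmod i hi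
  set r := (v i * w) % m with hr
  have hrm : r < m := Nat.mod_lt _ (by omega)
  have hre : r ≡ v i * w [MOD m] := (Nat.mod_modEq _ _)
  -- key: multiplying a congruence involving v i * w by s recovers v i
  have key : ∀ a : ℕ, v i * w ≡ a [MOD m] → v i ≡ s * a [MOD m] := by
    intro a ha
    calc v i = v i * 1 := by ring
    _ ≡ v i * (s * w) [MOD m] := (Nat.ModEq.mul_left _ hw'.symm)
    _ = s * (v i * w) := by ring
    _ ≡ s * a [MOD m] := Nat.ModEq.mul_left _ ha
  have hr0 : r ≠ 0 := by
    intro h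
    exact h0 (by simpa [h, Nat.mul_zero] using key 0 (hre.symm.trans (by rw [h])))
  have hr1 : r ≠ 1 := by
    intro h
    exact hsc (by simpa using key 1 (hre.symm.trans (by rw [h])))
  have hrm1 : r ≠ m - 1 := by
    intro h
    apply htc
    have := key (m-1) (hre.symm.trans (by rw [h]))
    have h2 : s * (m - 1) ≡ t [MOD m] := by
      rw [← ZMod.natCast_eq_natCast_iff]
      have hmz : ((m : ℕ) : ZMod m) = 0 := ZMod.natCast_self m
      have hst : ((s : ZMod m) + t) = 0 := by
        rw [← Nat.cast_add, ← hm, hmz]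
      push_cast [Nat.cast_sub (by omega : 1 ≤ m)]
      rw [hmz]
      linear_combination -hst
    exact this.trans h2
  -- now 2 ≤ r ≤ m - 2
  have hr2 : 2 ≤ r := by omega
  have hrm2 : r ≤ m - 2 := by omega
  -- fract computation
  have hmR : (0:ℝ) < m := by positivity
  have hfr : Int.fract ((v i : ℝ) * ((w:ℝ)/m)) = (r : ℝ) / m := by
    have hdiv : (v i : ℝ) * ((w:ℝ)/m) = (r : ℝ)/m + ((v i * w / m : ℕ) : ℤ) := by
      have hq : ((m:ℝ) * ((v i * w / m : ℕ):ℝ) + (r:ℝ)) = ((v i : ℕ):ℝ) * w := by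
        exact_mod_cast congrArg (Nat.cast : ℕ → ℝ) (Nat.div_add_mod (v i * w) m)
      rw [Int.cast_natCast]
      field_simp
      linarith
    rw [hdiv, Int.fract_add_intCast, Int.fract_eq_self.2 ⟨by positivity, by
      rw [div_lt_one hmR]; exact_mod_cast hrm⟩]
  rw [hfr]
  constructor
  · rw [div_lt_div_iff₀ (by positivity) hmR]
    have : (m:ℝ) ≤ 2*n := by exact_mod_cast hsum
    have : (2:ℝ) ≤ r := by exact_mod_cast hr2
    have hn' : (2:ℝ) ≤ n := by exact_mod_cast hn
    nlinarith
  · rw [div_lt_div_iff₀ hmR (by positivity)]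
    have h1 : (r:ℝ) ≤ m - 2 := by
      have : (r:ℝ) + 2 ≤ m := by exact_mod_cast (by omega : r + 2 ≤ m)
      linarith
    have h2 : (m:ℝ) ≤ 2*n := by exact_mod_cast hsum
    nlinarith
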